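/- Let q be a prime power, let r ≥ 1, and let p ∈ F_q[x,y] be a monic homogeneous polynomial of degree r+1. Then the set of pairs (g, h), where h ∈ F_q[x,y] is monic homogeneous of degree r, g ∈ F_q[x,y] is homogeneous of degree at most r, g and h are coprime, and x·h − y·g = c·p for some c ∈ F_q^×, has cardinality at most q^r. -/

import Mathlib

open MvPolynomial

/-- The dehomogenization of a bivariate polynomial: set `y = 1`. -/
noncomputable def dehom {k : Type*} [CommSemiring k] (p : MvPolynomial (Fin 2) k) :
    Polynomial k :=
  MvPolynomial.aeval (fun i : Fin 2 => if i = 0 then Polynomial.X else 1) p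

/-- A homogeneous polynomial `p ∈ k[x,y]` is monic if `p(x,1)` is monic. -/
def MonicHom {k : Type*} [CommSemiring k] (p : MvPolynomial (Fin 2) k) : Prop :=
  (dehom p).Monic

namespace Stmt7Aux

/-- the standard bivariate monomial exponent `x^i y^(n-i)` -/
noncomputable def mi (n i : ℕ) : Fin 2 →₀ ℕ := Finsupp.single 0 i + Finsupp.single 1 (n - i)

lemma mi_apply_zero (n i : ℕ) : (mi n i) 0 = i := by
  simp [mi, Finsupp.single_apply]

lemma degree_eq (d : Fin 2 →₀ ℕ) : d.degree = d 0 + d 1 := by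
  rw [Finsupp.degree_apply]
  rw [Finset.sum_subset (Finset.subset_univ d.support)
    (by intro i _ h; simpa using Finsupp.notMem_support_iff.mp h)]
  exact Fin.sum_univ_two d

lemma eq_mi {d : Fin 2 →₀ ℕ} {n : ℕ} (h : d 0 + d 1 = n) : d = mi n (d 0) := by
  ext j
  fin_cases j <;> simp [mi, Finsupp.single_apply] <;> omega

variable {F : Type*} [Field F]

lemma hom_deg {h : MvPolynomial (Fin 2) F} {n : ℕ} (H : h.IsHomogeneous n)
    {d : Fin 2 →₀ ℕ} (hd : coeff d h ≠ 0) : d 0 + d 1 = n := by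
  by_contra hc
  exact hd (H.coeff_eq_zero (by rwa [degree_eq]))

lemma hom_ext {h₁ h₂ : MvPolynomial (Fin 2) F} {n : ℕ} (H1 : h₁.IsHomogeneous n)
    (H2 : h₂.IsHomogeneous n)
    (He : ∀ i ≤ n, coeff (mi n i) h₁ = coeff (mi n i) h₂) : h₁ = h₂ := by
  ext d
  by_cases hd : d 0 + d 1 = n
  · rw [eq_mi hd]; exact He (d 0) (by omega)
  · rw [H1.coeff_eq_zero (by rwa [degree_eq]), H2.coeff_eq_zero (by rwa [degree_eq])]

lemma dehom_eq (h : MvPolynomial (Fin 2) F) :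
    dehom h = ∑ d ∈ h.support, Polynomial.C (coeff d h) * Polynomial.X ^ (d 0) := by
  rw [dehom, aeval_def, eval₂_eq]
  refine Finset.sum_congr rfl fun d _ => ?_
  congr 1
  rw [Finset.prod_subset (Finset.subset_univ d.support)
    (by intro i _ hi; rw [Finsupp.notMem_support_iff.mp hi, pow_zero])]
  rw [Fin.prod_univ_two]
  simp

lemma dehom_coeff {h : MvPolynomial (Fin 2) F} {n : ℕ} (H : h.IsHomogeneous n)
    {i : ℕ} (hi : i ≤ n) : (dehom h).coeff i = coeff (mi n i) h := by
  rw [dehom_eq]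
  rw [Polynomial.finset_sum_coeff]
  simp only [Polynomial.coeff_C_mul, Polynomial.coeff_X_pow, mul_ite, mul_one, mul_zero]
  rw [Finset.sum_eq_single (mi n i)]
  · simp [mi_apply_zero]
  · intro d hd hne
    rw [if_neg]
    intro h0
    refine hne ?_
    rw [h0]
    exact eq_mi (hom_deg H (MvPolynomial.mem_support_iff.mp hd))
  · intro hd
    rw [MvPolynomial.notMem_support_iff.mp hd]
    simp

lemma dehom_coeff_gt {h : MvPolynomial (Fin 2) F} {n : ℕ} (H : h.IsHomogeneous n)
    {i : ℕ} (hi : n < i) : (dehom h).coeff i = 0 := by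
  rw [dehom_eq, Polynomial.finset_sum_coeff]
  refine Finset.sum_eq_zero fun d hd => ?_
  have := hom_deg H (MvPolynomial.mem_support_iff.mp hd)
  simp only [Polynomial.coeff_C_mul, Polynomial.coeff_X_pow, mul_ite, mul_one, mul_zero]
  rw [if_neg (by omega)]

/-- From the fixed-point equation, the top `x`-coefficient relation `a_r = c * b`. -/
lemma top_coeff {g h p : MvPolynomial (Fin 2) F} {c : F} {r : ℕ}
    (E : X 0 * h - X 1 * g = C c * p) :
    coeff (mi r r) h = c * coeff (Finsupp.single 0 (r + 1)) p := by
  have this := congrArg (coeff (Finsupp.single 0 (r + 1))) E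
  rw [coeff_sub, coeff_C_mul] at this
  have h1 : (Finsupp.single 0 (r+1) : Fin 2 →₀ ℕ) = Finsupp.single 0 1 + Finsupp.single 0 r := by
    rw [← Finsupp.single_add, Nat.add_comm]
  have e0 : coeff (Finsupp.single 0 (r+1)) (X 0 * h) = coeff (Finsupp.single 0 r) h := by
    rw [h1, coeff_X_mul]
  have h2 : coeff (Finsupp.single 0 (r+1)) (X 1 * g) = 0 := by
    classical
    rw [coeff_X_mul']
    rw [if_neg (by simp [Finsupp.single_apply])]
  rw [e0, h2, sub_zero] at this
  have h3 : mi r r = Finsupp.single 0 r := by simp [mi]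
  rw [h3]; exact this

lemma ar_eq_one {h p : MvPolynomial (Fin 2) F} {r : ℕ} (H : h.IsHomogeneous r)
    (hm : MonicHom h) {g : MvPolynomial (Fin 2) F} {c : F}
    (E : X 0 * h - X 1 * g = C c * p) (hc : c ≠ 0)
    (hb : coeff (Finsupp.single 0 (r + 1)) p ≠ 0) : coeff (mi r r) h = 1 := by
  have har : coeff (mi r r) h ≠ 0 := by
    rw [top_coeff E]; exact mul_ne_zero hc hb
  have hcr : (dehom h).coeff r = coeff (mi r r) h := dehom_coeff H le_rfl
  have hdeg : (dehom h).natDegree = r := by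
    refine le_antisymm (Polynomial.natDegree_le_iff_coeff_eq_zero.mpr
      fun m hm' => dehom_coeff_gt H hm') (Polynomial.le_natDegree_of_ne_zero ?_)
    rw [hcr]; exact har
  have := hm
  rw [MonicHom, Polynomial.Monic, Polynomial.leadingCoeff, hdeg, hcr] at this
  exact this

lemma cancel_g {g₁ g₂ h p : MvPolynomial (Fin 2) F} {c : F}
    (E1 : X 0 * h - X 1 * g₁ = C c * p) (E2 : X 0 * h - X 1 * g₂ = C c * p) : g₁ = g₂ := by
  have : X (R := F) 1 * g₁ = X 1 * g₂ := by
    have := E1.trans E2.symm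
    linear_combination (norm := ring_nf) -this
  exact mul_left_cancel₀ (MvPolynomial.X_ne_zero 1) this

lemma conclude {α : Type*} {S : Set α} {q r : ℕ} {F : Type*} [Field F] [Fintype F]
    (hF : Fintype.card F = q) (f : ↥S → (Fin r → F)) (hf : Function.Injective f) :
    S.Finite ∧ S.ncard ≤ q ^ r := by
  have hfin : Finite ↥S := Finite.of_injective f hf
  refine ⟨Set.finite_coe_iff.mp hfin, ?_⟩
  rw [← Nat.card_coe_set_eq]
  calc Nat.card ↥S ≤ Nat.card (Fin r → F) := Nat.card_le_card_of_injective f hf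
    _ = q ^ r := by simp [Nat.card_eq_fintype_card, hF]

end Stmt7Aux

open Stmt7Aux

/-- Corollary 2.7 of the paper. -/
theorem stmt_7 (q r : ℕ) (hq : IsPrimePow q) (hr : 1 ≤ r)
    (F : Type*) [Field F] [Fintype F] (hF : Fintype.card F = q)
    (p : MvPolynomial (Fin 2) F) (hp : p.IsHomogeneous (r + 1)) (hpm : MonicHom p)
    (S : Set (MvPolynomial (Fin 2) F × MvPolynomial (Fin 2) F))
    (hS : S = {gh | gh.2.IsHomogeneous r ∧ MonicHom gh.2 ∧
      (∃ s ≤ r, gh.1.IsHomogeneous s) ∧ IsRelPrime gh.1 gh.2 ∧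
      ∃ c : F, c ≠ 0 ∧ X 0 * gh.2 - X 1 * gh.1 = C c * p}) :
    S.Finite ∧ S.ncard ≤ q ^ r := by
  have hmem0 : ∀ gh ∈ S, gh.2.IsHomogeneous r ∧ MonicHom gh.2 ∧
      ∃ c : F, c ≠ 0 ∧ X 0 * gh.2 - X 1 * gh.1 = C c * p := by
    intro gh hgh
    rw [hS] at hgh
    exact ⟨hgh.1, hgh.2.1, hgh.2.2.2.2⟩
  have hmem : ∀ x : ↥S, x.1.2.IsHomogeneous r ∧ MonicHom x.1.2 ∧
      ∃ c : F, c ≠ 0 ∧ X 0 * x.1.2 - X 1 * x.1.1 = C c * p :=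
    fun x => hmem0 x.1 x.2
  by_cases hb : coeff (Finsupp.single 0 (r + 1)) p = 0
  · -- degenerate case: use c * coefficients of h
    refine conclude hF (fun x i => (hmem x).2.2.choose * coeff (mi r i) x.1.2) ?_
    intro x y hxy
    obtain ⟨H1, M1, _⟩ := hmem x
    obtain ⟨H2, M2, _⟩ := hmem y
    obtain ⟨hc1, E1⟩ := (hmem x).2.2.choose_spec
    obtain ⟨hc2, E2⟩ := (hmem y).2.2.choose_spec
    set c₁ := (hmem x).2.2.choose
    set c₂ := (hmem y).2.2.choose
    have har1 : coeff (mi r r) x.1.2 = 0 := by rw [top_coeff E1, hb, mul_zero]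
    have har2 : coeff (mi r r) y.1.2 = 0 := by rw [top_coeff E2, hb, mul_zero]
    have hCh : C c₁ * x.1.2 = C c₂ * y.1.2 := by
      refine hom_ext (zero_add r ▸ (isHomogeneous_C _ c₁).mul H1)
        (zero_add r ▸ (isHomogeneous_C _ c₂).mul H2) fun i hi => ?_
      rcases lt_or_eq_of_le hi with hi' | hi'
      · have := congrFun hxy ⟨i, hi'⟩
        simpa [coeff_C_mul] using this
      · subst hi'; rw [coeff_C_mul, coeff_C_mul, har1, har2, mul_zero, mul_zero]
    have hceq : c₁ = c₂ := by
      have hd := congrArg dehom hCh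
      have hd' : Polynomial.C c₁ * dehom x.1.2 = Polynomial.C c₂ * dehom y.1.2 := by
        simpa [dehom, map_mul, aeval_C, Algebra.algebraMap_self] using hd
      have := congrArg Polynomial.leadingCoeff hd'
      rwa [Polynomial.leadingCoeff_mul, Polynomial.leadingCoeff_mul,
        Polynomial.leadingCoeff_C, Polynomial.leadingCoeff_C, M1, M2,
        mul_one, mul_one] at this
    have hh : x.1.2 = y.1.2 := by
      rw [hceq] at hCh
      exact mul_left_cancel₀ (by simp [MvPolynomial.C_eq_zero, hc2]) hCh
    have hg : x.1.1 = y.1.1 := by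
      rw [hceq, hh] at E1
      exact cancel_g E1 E2
    exact Subtype.ext (Prod.ext hg hh)
  · -- generic case: use coefficients of h directly
    refine conclude hF (fun x i => coeff (mi r i) x.1.2) ?_
    intro x y hxy
    obtain ⟨H1, M1, _⟩ := hmem x
    obtain ⟨H2, M2, _⟩ := hmem y
    obtain ⟨c₁, hc1, E1⟩ := (hmem x).2.2
    obtain ⟨c₂, hc2, E2⟩ := (hmem y).2.2
    have har1 : coeff (mi r r) x.1.2 = 1 := ar_eq_one H1 M1 E1 hc1 hb
    have har2 : coeff (mi r r) y.1.2 = 1 := ar_eq_one H2 M2 E2 hc2 hb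
    have hh : x.1.2 = y.1.2 := by
      refine hom_ext H1 H2 fun i hi => ?_
      rcases lt_or_eq_of_le hi with hi' | hi'
      · exact congrFun hxy ⟨i, hi'⟩
      · subst hi'; rw [har1, har2]
    have hceq : c₁ = c₂ := by
      have e1 := (top_coeff (r := r) E1).symm.trans har1
      have e2 := (top_coeff (r := r) E2).symm.trans har2
      exact mul_right_cancel₀ hb (e1.trans e2.symm)
    have hg : x.1.1 = y.1.1 := by
      rw [hceq, hh] at E1
      exact cancel_g E1 E2
    exact Subtype.ext (Prod.ext hg hh)
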